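/- A connected balanced bipartite graph G is α⁺-stable if and only if it admits a decomposition G = G₁ ∪ … ∪ G_k into induced subgraphs G_i whose vertex sets are pairwise disjoint and partition the vertex set of G, with every G_i bistable bipartite. -/

import Mathlib

open SimpleGraph

/-- A stable (independent) set of vertices: pairwise nonadjacent. -/
def IsStableSet {V : Type*} (G : SimpleGraph V) (S : Set V) : Prop :=
  S.Pairwise fun u v => ¬ G.Adj u v

/-- The stability number `α(G)`: maximum cardinality of a stable set. -/
noncomputable def stabNum {V : Type*} (G : SimpleGraph V) : ℕ :=
  sSup {k | ∃ S : Set V, IsStableSet G S ∧ S.ncard = k}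

/-- A maximum stable set. -/
def IsMaxStableSet {V : Type*} (G : SimpleGraph V) (S : Set V) : Prop :=
  IsStableSet G S ∧ S.ncard = stabNum G

/-- `G` is α⁺-stable: adding any edge between nonadjacent vertices keeps α. -/
def AlphaPlusStable {V : Type*} (G : SimpleGraph V) : Prop :=
  ∀ x y : V, x ≠ y → ¬ G.Adj x y →
    stabNum (G ⊔ SimpleGraph.fromEdgeSet {s(x, y)}) = stabNum G

/-- `G` is α⁻-stable: deleting any edge keeps α. -/
def AlphaMinusStable {V : Type*} (G : SimpleGraph V) : Prop :=
  ∀ e ∈ G.edgeSet, stabNum (G.deleteEdges {e}) = stabNum G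

/-- `G` is α-stable: both α⁺-stable and α⁻-stable. -/
def AlphaStable {V : Type*} (G : SimpleGraph V) : Prop :=
  AlphaPlusStable G ∧ AlphaMinusStable G

/-- `{A, B}` is a bipartition of `G`. -/
def IsBipartition {V : Type*} (G : SimpleGraph V) (A B : Set V) : Prop :=
  Disjoint A B ∧ A ∪ B = Set.univ ∧
    ∀ ⦃x y⦄, G.Adj x y → (x ∈ A ∧ y ∈ B) ∨ (x ∈ B ∧ y ∈ A)

/-- `G` is bistable bipartite w.r.t. bipartition `{A, B}`:
`A` and `B` are its only maximum stable sets. -/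
def BistableBipartite {V : Type*} (G : SimpleGraph V) (A B : Set V) : Prop :=
  IsBipartition G A B ∧ ∀ S : Set V, IsMaxStableSet G S ↔ S = A ∨ S = B

/-- `G` has a perfect matching. -/
def HasPerfectMatching {V : Type*} (G : SimpleGraph V) : Prop :=
  ∃ M : G.Subgraph, M.IsPerfectMatching

/-- `X` has a `k` by `n - k` zero submatrix for some `1 ≤ k ≤ n - 1`. -/
def HasZeroSubmatrix {m : Type*} [Fintype m] (X : Matrix m m ℕ) : Prop :=
  ∃ R C : Finset m, R.Nonempty ∧ C.Nonempty ∧ R.card + C.card = Fintype.card m ∧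
    ∀ i ∈ R, ∀ j ∈ C, X i j = 0

/-- A square matrix is partly decomposable. -/
def PartlyDecomposable {m : Type*} [Fintype m] (X : Matrix m m ℕ) : Prop :=
  (Fintype.card m = 1 ∧ ∀ i j, X i j = 0) ∨ HasZeroSubmatrix X

/-- A square matrix is fully indecomposable iff it is not partly decomposable. -/
def FullyIndecomposable {m : Type*} [Fintype m] (X : Matrix m m ℕ) : Prop :=
  ¬ PartlyDecomposable X

/-- A (0,1)-matrix. -/
def ZeroOne {m k : Type*} (X : Matrix m k ℕ) : Prop :=
  ∀ i j, X i j = 0 ∨ X i j = 1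

/-- The term rank: maximal number of nonzero entries, no two on a line. -/
noncomputable def termRank {m k : Type*} [Fintype m] [Fintype k] (X : Matrix m k ℕ) : ℕ :=
  sSup {r | ∃ (f : Fin r ↪ m) (g : Fin r ↪ k), ∀ i, X (f i) (g i) ≠ 0}

/-- The permanent of a square matrix with natural entries. -/
def perm {m : Type*} [Fintype m] [DecidableEq m] (X : Matrix m m ℕ) : ℕ :=
  ∑ σ : Equiv.Perm m, ∏ i, X (σ i) i

/-- The bipartite graph whose reduced adjacency matrix is the (0,1)-matrix `X`. -/
def matGraph {ι κ : Type*} (X : Matrix ι κ ℕ) : SimpleGraph (ι ⊕ κ) :=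
  SimpleGraph.fromRel fun u v => ∃ i j, u = Sum.inl i ∧ v = Sum.inr j ∧ X i j = 1

lemma stabSet_nonempty {V : Type*} (G : SimpleGraph V) :
    {k | ∃ S : Set V, IsStableSet G S ∧ S.ncard = k}.Nonempty :=
  ⟨0, ∅, Set.pairwise_empty _, Set.ncard_empty _⟩

lemma stabSet_bddAbove {V : Type*} [Fintype V] (G : SimpleGraph V) :
    BddAbove {k | ∃ S : Set V, IsStableSet G S ∧ S.ncard = k} := by
  refine ⟨Fintype.card V, ?_⟩
  rintro k ⟨S, -, rfl⟩
  calc S.ncard ≤ (Set.univ : Set V).ncard :=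
        Set.ncard_le_ncard (Set.subset_univ S) (Set.toFinite _)
    _ = Fintype.card V := by rw [Set.ncard_univ, Nat.card_eq_fintype_card]

lemma le_stabNum {V : Type*} [Fintype V] {G : SimpleGraph V} {S : Set V}
    (h : IsStableSet G S) : S.ncard ≤ stabNum G :=
  le_csSup (stabSet_bddAbove G) ⟨S, h, rfl⟩

lemma stabNum_le {V : Type*} {G : SimpleGraph V} {m : ℕ}
    (h : ∀ S : Set V, IsStableSet G S → S.ncard ≤ m) : stabNum G ≤ m :=
  csSup_le (stabSet_nonempty G) (by rintro k ⟨S, hS, rfl⟩; exact h S hS)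

lemma exists_maxStableSet {V : Type*} [Fintype V] (G : SimpleGraph V) :
    ∃ S : Set V, IsMaxStableSet G S := by
  have := Nat.sSup_mem (stabSet_nonempty G) (stabSet_bddAbove G)
  obtain ⟨S, hS, hcard⟩ := this
  exact ⟨S, hS, hcard⟩

def nbrSet {V : Type*} (G : SimpleGraph V) (X : Set V) : Set V :=
  {v | ∃ x ∈ X, G.Adj x v}

noncomputable def valA {V : Type*} (G : SimpleGraph V) (B X : Set V) : ℕ :=
  X.ncard + (B \ nbrSet G X).ncard

lemma nbr_mono {V : Type*} {G : SimpleGraph V} {X Y : Set V} (h : X ⊆ Y) :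
    nbrSet G X ⊆ nbrSet G Y := by
  rintro v ⟨x, hx, hadj⟩; exact ⟨x, h hx, hadj⟩

lemma nbr_union {V : Type*} (G : SimpleGraph V) (X Y : Set V) :
    nbrSet G (X ∪ Y) = nbrSet G X ∪ nbrSet G Y := by
  ext v
  constructor
  · rintro ⟨x, hx | hx, hadj⟩
    · exact Or.inl ⟨x, hx, hadj⟩
    · exact Or.inr ⟨x, hx, hadj⟩
  · rintro (⟨x, hx, hadj⟩ | ⟨x, hx, hadj⟩)
    · exact ⟨x, Or.inl hx, hadj⟩
    · exact ⟨x, Or.inr hx, hadj⟩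

lemma bip_stable_A {V : Type*} {G : SimpleGraph V} {A B : Set V}
    (hbip : IsBipartition G A B) : IsStableSet G A := by
  intro x hx y hy _ hadj
  rcases hbip.2.2 hadj with ⟨_, hyB⟩ | ⟨hxB, _⟩
  · exact Set.disjoint_left.mp hbip.1 hy hyB
  · exact Set.disjoint_left.mp hbip.1 hx hxB

lemma bip_stable_B {V : Type*} {G : SimpleGraph V} {A B : Set V}
    (hbip : IsBipartition G A B) : IsStableSet G B := by
  intro x hx y hy _ hadj
  rcases hbip.2.2 hadj with ⟨hxA, _⟩ | ⟨_, hyA⟩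
  · exact Set.disjoint_left.mp hbip.1 hxA hx
  · exact Set.disjoint_left.mp hbip.1 hyA hy

lemma nbr_subset_B {V : Type*} {G : SimpleGraph V} {A B : Set V}
    (hbip : IsBipartition G A B) {X : Set V} (hX : X ⊆ A) : nbrSet G X ⊆ B := by
  rintro v ⟨x, hx, hadj⟩
  rcases hbip.2.2 hadj with ⟨_, hvB⟩ | ⟨hxB, _⟩
  · exact hvB
  · exact absurd hxB (Set.disjoint_left.mp hbip.1 (hX hx))

lemma stable_val_set {V : Type*} {G : SimpleGraph V} {A B : Set V}
    (hbip : IsBipartition G A B) {X : Set V} (hX : X ⊆ A) :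
    IsStableSet G (X ∪ (B \ nbrSet G X)) := by
  rintro u (huX | ⟨huB, hun⟩) v (hvX | ⟨hvB, hvn⟩) hne hadj
  · exact bip_stable_A hbip (hX huX) (hX hvX) hne hadj
  · exact hvn ⟨u, huX, hadj⟩
  · exact hun ⟨v, hvX, hadj.symm⟩
  · exact bip_stable_B hbip huB hvB hne hadj

lemma val_set_ncard {V : Type*} [Fintype V] {G : SimpleGraph V} {A B : Set V}
    (hbip : IsBipartition G A B) {X : Set V} (hX : X ⊆ A) :
    (X ∪ (B \ nbrSet G X)).ncard = valA G B X := by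
  have hdis : Disjoint X (B \ nbrSet G X) :=
    Disjoint.mono hX Set.diff_subset hbip.1
  rw [Set.ncard_union_eq hdis (Set.toFinite _) (Set.toFinite _)]; rfl

lemma stable_le_valA {V : Type*} [Fintype V] {G : SimpleGraph V} {A B : Set V}
    (hbip : IsBipartition G A B) {S : Set V} (hS : IsStableSet G S) :
    S.ncard ≤ valA G B (S ∩ A) := by
  have hSeq : S = (S ∩ A) ∪ (S ∩ B) := by
    rw [← Set.inter_union_distrib_left, hbip.2.1, Set.inter_univ]
  have hsub : S ∩ B ⊆ B \ nbrSet G (S ∩ A) := by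
    rintro y ⟨hyS, hyB⟩
    refine ⟨hyB, ?_⟩
    rintro ⟨x, ⟨hxS, _⟩, hadj⟩
    exact hS hxS hyS hadj.ne hadj
  have hdis : Disjoint (S ∩ A) (S ∩ B) :=
    Disjoint.mono Set.inter_subset_right Set.inter_subset_right hbip.1
  calc S.ncard = (S ∩ A).ncard + (S ∩ B).ncard := by
        conv_lhs => rw [hSeq]
        rw [Set.ncard_union_eq hdis (Set.toFinite _) (Set.toFinite _)]
    _ ≤ (S ∩ A).ncard + (B \ nbrSet G (S ∩ A)).ncard :=
        Nat.add_le_add_left (Set.ncard_le_ncard hsub (Set.toFinite _)) _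
    _ = valA G B (S ∩ A) := rfl

lemma valA_supermod {V : Type*} [Fintype V] (G : SimpleGraph V) (B : Set V) (X Y : Set V) :
    valA G B X + valA G B Y ≤ valA G B (X ∩ Y) + valA G B (X ∪ Y) := by
  have h1 : (X ∩ Y).ncard + (X ∪ Y).ncard = X.ncard + Y.ncard :=
    Set.ncard_inter_add_ncard_union X Y (Set.toFinite _) (Set.toFinite _)
  have e1 : B \ nbrSet G (X ∪ Y) = (B \ nbrSet G X) ∩ (B \ nbrSet G Y) := by
    rw [nbr_union, Set.diff_inter_diff]
  have e2 : (B \ nbrSet G X) ∪ (B \ nbrSet G Y) ⊆ B \ nbrSet G (X ∩ Y) := by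
    rintro v (⟨hvB, hv⟩ | ⟨hvB, hv⟩) <;>
      exact ⟨hvB, fun hmem => hv (nbr_mono (by simp) hmem)⟩
  have h2 : (B \ nbrSet G X).ncard + (B \ nbrSet G Y).ncard ≤
      (B \ nbrSet G (X ∩ Y)).ncard + (B \ nbrSet G (X ∪ Y)).ncard := by
    have h3 : ((B \ nbrSet G X) ∩ (B \ nbrSet G Y)).ncard +
        ((B \ nbrSet G X) ∪ (B \ nbrSet G Y)).ncard
        = (B \ nbrSet G X).ncard + (B \ nbrSet G Y).ncard :=
      Set.ncard_inter_add_ncard_union _ _ (Set.toFinite _) (Set.toFinite _)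
    have h4 : ((B \ nbrSet G X) ∪ (B \ nbrSet G Y)).ncard ≤ (B \ nbrSet G (X ∩ Y)).ncard :=
      Set.ncard_le_ncard e2 (Set.toFinite _)
    rw [← e1] at h3
    omega
  unfold valA
  omega

lemma core_pair {V : Type*} [Fintype V] {G : SimpleGraph V} {A B : Set V}
    (hbip : IsBipartition G A B) (hbal : A.ncard = B.ncard) (hconn : G.Connected)
    (hviol : ∃ X ⊆ A, (nbrSet G X).ncard < X.ncard) :
    ∃ x y : V, x ≠ y ∧ ¬ G.Adj x y ∧
      ∀ S : Set V, IsMaxStableSet G S → x ∈ S ∧ y ∈ S := by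
  classical
  obtain ⟨hdisj, hunion, hadj⟩ := hbip
  set vSet : Set ℕ := {n | ∃ X, X ⊆ A ∧ valA G B X = n} with hvSet
  have hvne : vSet.Nonempty := ⟨valA G B ∅, ∅, Set.empty_subset _, rfl⟩
  have hvbdd : BddAbove vSet := by
    refine ⟨2 * Fintype.card V, ?_⟩
    rintro n ⟨X, -, rfl⟩
    have h1 : X.ncard ≤ Fintype.card V := by
      simpa [Set.ncard_univ, Nat.card_eq_fintype_card] using
        Set.ncard_le_ncard (Set.subset_univ X) (Set.toFinite _)
    have h2 : (B \ nbrSet G X).ncard ≤ Fintype.card V := by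
      simpa [Set.ncard_univ, Nat.card_eq_fintype_card] using
        Set.ncard_le_ncard (Set.subset_univ (B \ nbrSet G X)) (Set.toFinite _)
    unfold valA; omega
  set mval : ℕ := sSup vSet with hmval
  have hval_le : ∀ X ⊆ A, valA G B X ≤ mval := fun X hX => le_csSup hvbdd ⟨X, hX, rfl⟩
  -- stabNum G = mval
  have hstab_eq : stabNum G = mval := by
    refine le_antisymm (stabNum_le fun S hS => ?_) ?_
    · exact le_trans (stable_le_valA ⟨hdisj, hunion, hadj⟩ hS)
        (hval_le _ Set.inter_subset_right)
    · obtain ⟨X, hXA, hXval⟩ := Nat.sSup_mem hvne hvbdd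
      rw [← hmval] at hXval
      rw [← hXval, ← val_set_ncard ⟨hdisj, hunion, hadj⟩ hXA]
      exact le_stabNum (stable_val_set ⟨hdisj, hunion, hadj⟩ hXA)
  -- minimal-cardinality maximizer
  set cset : Set ℕ := {n | ∃ X, X ⊆ A ∧ valA G B X = mval ∧ X.ncard = n} with hcset
  have hcne : cset.Nonempty := by
    obtain ⟨X, hXA, hXval⟩ := Nat.sSup_mem hvne hvbdd
    exact ⟨X.ncard, X, hXA, hXval, rfl⟩
  obtain ⟨X₀, hX₀A, hX₀val, hX₀card⟩ := Nat.sInf_mem hcne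
  have hX₀min : ∀ Y, Y ⊆ A → valA G B Y = mval → X₀ ⊆ Y := by
    intro Y hYA hYval
    have hsup := valA_supermod G B X₀ Y
    have hle1 : valA G B (X₀ ∩ Y) ≤ mval := hval_le _ (Set.inter_subset_left.trans hX₀A)
    have hle2 : valA G B (X₀ ∪ Y) ≤ mval := hval_le _ (Set.union_subset hX₀A hYA)
    have hinter : valA G B (X₀ ∩ Y) = mval := by omega
    have hmem : (X₀ ∩ Y).ncard ∈ cset := ⟨X₀ ∩ Y, Set.inter_subset_left.trans hX₀A, hinter, rfl⟩
    have hge : X₀.ncard ≤ (X₀ ∩ Y).ncard := hX₀card ▸ Nat.sInf_le hmem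
    have := Set.eq_of_subset_of_ncard_le Set.inter_subset_left hge (Set.toFinite _)
    rw [← this]
    exact Set.inter_subset_right
  -- every maximum stable set contains X₀
  have hcontain : ∀ S : Set V, IsMaxStableSet G S → X₀ ⊆ S := by
    rintro S ⟨hS, hScard⟩
    have h1 : S.ncard ≤ valA G B (S ∩ A) := stable_le_valA ⟨hdisj, hunion, hadj⟩ hS
    have h2 : valA G B (S ∩ A) ≤ mval := hval_le _ Set.inter_subset_right
    have h3 : valA G B (S ∩ A) = mval := by rw [hstab_eq] at hScard; omega
    exact (hX₀min _ Set.inter_subset_right h3).trans Set.inter_subset_left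
  -- mval > B.ncard
  obtain ⟨X, hXA, hXdef⟩ := hviol
  have hNB : nbrSet G X ⊆ B := nbr_subset_B ⟨hdisj, hunion, hadj⟩ hXA
  have hNle : (nbrSet G X).ncard ≤ B.ncard := Set.ncard_le_ncard hNB (Set.toFinite _)
  have hdiff : (B \ nbrSet G X).ncard = B.ncard - (nbrSet G X).ncard :=
    Set.ncard_diff hNB (Set.toFinite _)
  have hmgt : B.ncard < mval := by
    have := hval_le X hXA
    unfold valA at this
    omega
  -- X₀ has at least two elements
  have hX₀ne : X₀.Nonempty := by
    rcases Set.eq_empty_or_nonempty X₀ with h | h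
    · exfalso
      rw [h] at hX₀val
      unfold valA at hX₀val
      simp only [Set.ncard_empty, zero_add] at hX₀val
      have : nbrSet G (∅ : Set V) = ∅ := by
        ext v; simp [nbrSet]
      rw [this, Set.diff_empty] at hX₀val
      omega
    · exact h
  have hX₀two : 1 < X₀.ncard := by
    rcases Nat.lt_or_ge 1 X₀.ncard with h | h
    · exact h
    -- X₀ is a singleton
    exfalso
    have h1 : X₀.ncard = 1 := le_antisymm h ((Set.ncard_pos (Set.toFinite _)).mpr hX₀ne)
    obtain ⟨x, rfl⟩ := Set.ncard_eq_one.mp h1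
    have hxA : x ∈ A := hX₀A rfl
    have hBN : B ⊆ B \ nbrSet G {x} := by
      have hsub : B \ nbrSet G {x} ⊆ B := Set.diff_subset
      have hN : nbrSet G {x} ⊆ B := nbr_subset_B ⟨hdisj, hunion, hadj⟩ (by simpa using hxA)
      have hcard : (B \ nbrSet G {x}).ncard = B.ncard - (nbrSet G {x}).ncard :=
        Set.ncard_diff hN (Set.toFinite _)
      have : B.ncard ≤ (B \ nbrSet G {x}).ncard := by
        unfold valA at hX₀val
        rw [h1] at hX₀val
        omega
      exact (Set.eq_of_subset_of_ncard_le hsub this (Set.toFinite _)).symm.subset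
    -- x has no neighbours
    have hxno : ∀ v, ¬ G.Adj x v := by
      intro v hv
      rcases hadj hv with ⟨_, hvB⟩ | ⟨hxB, _⟩
      · exact (hBN hvB).2 ⟨x, rfl, hv⟩
      · exact Set.disjoint_left.mp hdisj hxA hxB
    -- but G is connected with at least two vertices
    have hBne : B.Nonempty := by
      have hle : ({x} : Set V).ncard ≤ A.ncard := Set.ncard_le_ncard hX₀A (Set.toFinite _)
      rw [h1] at hle
      exact (Set.ncard_pos (Set.toFinite _)).mp (by omega)
    obtain ⟨y, hyB⟩ := hBne
    have hxy : x ≠ y := fun h => Set.disjoint_left.mp hdisj hxA (h ▸ hyB)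
    obtain ⟨w⟩ := hconn.preconnected x y
    cases w with
    | nil => exact hxy rfl
    | cons h _ => exact hxno _ h
  obtain ⟨x, y, hx, hy, hxy⟩ := (Set.one_lt_ncard_iff (Set.toFinite _)).mp hX₀two
  refine ⟨x, y, hxy, ?_, fun S hS => ⟨hcontain S hS (by exact hx), hcontain S hS (by exact hy)⟩⟩
  exact bip_stable_A ⟨hdisj, hunion, hadj⟩ (hX₀A hx) (hX₀A hy) hxy

lemma bistable_pair {W : Type*} (H : SimpleGraph W) (a b : W) (hab : H.Adj a b)
    (hcover : ∀ x : W, x = a ∨ x = b) :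
    BistableBipartite H {a} {b} := by
  have hne : a ≠ b := hab.ne
  have hstab_le : ∀ S : Set W, IsStableSet H S → S.ncard ≤ 1 := by
    intro S hS
    by_cases hain : a ∈ S
    · have hb : b ∉ S := fun hbin => hS hain hbin hne hab
      have : S ⊆ {a} := by
        intro x hx; rcases hcover x with rfl | rfl
        · rfl
        · exact absurd hx hb
      simpa using Set.ncard_le_ncard this (Set.finite_singleton a)
    · have : S ⊆ {b} := by
        intro x hx; rcases hcover x with rfl | rfl
        · exact absurd hx hain
        · rfl
      simpa using Set.ncard_le_ncard this (Set.finite_singleton b)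
  have hsa : IsStableSet H {a} := Set.pairwise_singleton _ _
  have hsb : IsStableSet H {b} := Set.pairwise_singleton _ _
  have hstab : stabNum H = 1 := by
    refine le_antisymm (csSup_le ⟨0, ∅, Set.pairwise_empty _, Set.ncard_empty _⟩ ?_) ?_
    · rintro k ⟨S, hS, rfl⟩; exact hstab_le S hS
    · refine le_csSup ⟨1, ?_⟩ ⟨{a}, hsa, Set.ncard_singleton a⟩
      rintro k ⟨S, hS, rfl⟩; exact hstab_le S hS
  refine ⟨⟨by simpa using hne, ?_, ?_⟩, ?_⟩
  · ext x; rcases hcover x with rfl | rfl <;> simp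
  · intro x y hxy
    rcases hcover x with rfl | rfl <;> rcases hcover y with rfl | rfl
    · exact absurd hxy (H.irrefl)
    · exact Or.inl ⟨rfl, rfl⟩
    · exact Or.inr ⟨rfl, rfl⟩
    · exact absurd hxy (H.irrefl)
  · intro S
    constructor
    · rintro ⟨hS, hcard⟩
      rw [hstab] at hcard
      obtain ⟨x, rfl⟩ := Set.ncard_eq_one.mp hcard
      rcases hcover x with rfl | rfl
      · exact Or.inl rfl
      · exact Or.inr rfl
    · rintro (rfl | rfl)
      · exact ⟨hsa, by rw [hstab]; exact Set.ncard_singleton a⟩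
      · exact ⟨hsb, by rw [hstab]; exact Set.ncard_singleton b⟩

lemma ncard_biUnion_eq {V : Type*} [Fintype V] {k : ℕ} (P : Fin k → Set V)
    (h : ∀ i j, i ≠ j → Disjoint (P i) (P j)) :
    (⋃ i, P i).ncard = ∑ i, (P i).ncard := by
  classical
  have key : ∀ s : Finset (Fin k), (⋃ i ∈ s, P i).ncard = ∑ i ∈ s, (P i).ncard := by
    intro s
    induction s using Finset.induction_on with
    | empty => simp
    | @insert a s ha ih =>
      rw [Finset.sum_insert ha, ← ih]
      have hdis : Disjoint (P a) (⋃ i ∈ s, P i) := by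
        rw [Set.disjoint_left]
        intro x hx hx'
        obtain ⟨i, hi, hxi⟩ := Set.mem_iUnion₂.mp hx'
        exact Set.disjoint_left.mp (h a i (fun hiq => ha (hiq ▸ hi))) hx hxi
      rw [Finset.set_biUnion_insert, Set.ncard_union_eq hdis (Set.toFinite _) (Set.toFinite _)]
  simpa using key Finset.univ

lemma hall_decomp {V : Type*} [Fintype V] {G : SimpleGraph V} {A B : Set V}
    (hbip : IsBipartition G A B) (hbal : A.ncard = B.ncard) (hAne : A.Nonempty)
    (hhall : ∀ X ⊆ A, X.ncard ≤ (nbrSet G X).ncard) :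
    ∃ k : ℕ, 1 ≤ k ∧ ∃ P : Fin k → Set V,
      (∀ i j, i ≠ j → Disjoint (P i) (P j)) ∧ (⋃ i, P i) = Set.univ ∧
      ∀ i, ∃ Ai Bi : Set (P i), BistableBipartite (G.induce (P i)) Ai Bi := by
  classical
  obtain ⟨hdisj, hunion, hadj⟩ := hbip
  haveI : Fintype ↥A := Fintype.ofFinite _
  haveI : Fintype ↥B := Fintype.ofFinite _
  set t : ↥A → Finset V := fun a => (Set.toFinite (nbrSet G {(a : V)})).toFinset with ht
  have hallF : ∀ s : Finset ↥A, s.card ≤ (s.biUnion t).card := by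
    intro s
    set X : Set V := Subtype.val '' (↑s : Set ↥A) with hX
    have hXA : X ⊆ A := by rintro _ ⟨a, _, rfl⟩; exact a.2
    have hXcard : X.ncard = s.card := by
      rw [hX, Set.ncard_image_of_injective _ Subtype.val_injective, Set.ncard_coe_finset]
    have hN : ((s.biUnion t : Finset V) : Set V) = nbrSet G X := by
      ext v
      simp only [Finset.coe_biUnion, Finset.mem_coe, Set.mem_iUnion, ht,
        Set.Finite.coe_toFinset, nbrSet, Set.mem_setOf_eq, hX]
      constructor
      · rintro ⟨a, ha, x, hx, hadj'⟩
        rcases hx with rfl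
        exact ⟨(a : V), ⟨a, ha, rfl⟩, hadj'⟩
      · rintro ⟨x, ⟨a, ha, rfl⟩, hadj'⟩
        exact ⟨a, ha, (a : V), rfl, hadj'⟩
    calc s.card = X.ncard := hXcard.symm
      _ ≤ (nbrSet G X).ncard := hhall X hXA
      _ = (s.biUnion t).card := by rw [← hN, Set.ncard_coe_finset]
  obtain ⟨f, hfinj, hf⟩ := (Finset.all_card_le_biUnion_card_iff_exists_injective t).mp hallF
  have hfadj : ∀ a : ↥A, G.Adj (a : V) (f a) := by
    intro a
    have := hf a
    rw [ht, Set.Finite.mem_toFinset] at this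
    obtain ⟨x, hx, hadj'⟩ := this
    rcases hx with rfl
    exact hadj'
  have hfB : ∀ a : ↥A, f a ∈ B := by
    intro a
    rcases hadj (hfadj a) with ⟨_, hB'⟩ | ⟨hB', _⟩
    · exact hB'
    · exact absurd hB' (Set.disjoint_left.mp hdisj a.2)
  set f' : ↥A → ↥B := fun a => ⟨f a, hfB a⟩ with hf'
  have hf'inj : Function.Injective f' := by
    intro a b hab
    exact hfinj (congrArg Subtype.val hab)
  have hcardAB : Fintype.card ↥A = Fintype.card ↥B := by
    rw [← Nat.card_eq_fintype_card, ← Nat.card_eq_fintype_card,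
      Nat.card_coe_set_eq, Nat.card_coe_set_eq, hbal]
  have hf'surj : Function.Surjective f' :=
    ((Fintype.bijective_iff_injective_and_card f').mpr ⟨hf'inj, hcardAB⟩).2
  set k := Fintype.card ↥A with hk
  have hk1 : 1 ≤ k := Fintype.card_pos_iff.mpr ⟨⟨hAne.choose, hAne.choose_spec⟩⟩
  set e : Fin k ≃ ↥A := (Fintype.equivFin ↥A).symm with he
  set P : Fin k → Set V := fun i => {(e i : V), f (e i)} with hP
  refine ⟨k, hk1, P, ?_, ?_, ?_⟩
  · intro i j hij
    have hij' : e i ≠ e j := fun h => hij (e.injective h)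
    rw [Set.disjoint_left]
    intro x hx hx'
    simp only [hP, Set.mem_insert_iff, Set.mem_singleton_iff] at hx hx'
    rcases hx with rfl | rfl <;> rcases hx' with h | h
    · exact hij' (Subtype.val_injective h)
    · exact Set.disjoint_left.mp hdisj (e i).2 (h ▸ hfB (e j))
    · exact Set.disjoint_left.mp hdisj (e j).2 (h.symm ▸ hfB (e i))
    · exact hij' (hfinj h)
  · ext v
    simp only [Set.mem_iUnion, Set.mem_univ, iff_true]
    have hv : v ∈ A ∪ B := hunion ▸ Set.mem_univ v
    rcases hv with hv | hv
    · exact ⟨e.symm ⟨v, hv⟩, by simp [hP]⟩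
    · obtain ⟨a, ha⟩ := hf'surj ⟨v, hv⟩
      refine ⟨e.symm a, ?_⟩
      have : f a = v := congrArg Subtype.val ha
      simp [hP, ← this]
  · intro i
    set a := e i with ha
    have hmem1 : (a : V) ∈ P i := by simp [hP, ha]
    have hmem2 : f a ∈ P i := by simp [hP, ha]
    refine ⟨{⟨(a : V), hmem1⟩}, {⟨f a, hmem2⟩}, bistable_pair _ _ _ ?_ ?_⟩
    · show G.Adj (a : V) (f a)
      exact hfadj a
    · rintro ⟨x, hx⟩
      simp only [hP, Set.mem_insert_iff, Set.mem_singleton_iff] at hx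
      rcases hx with rfl | rfl
      · exact Or.inl rfl
      · exact Or.inr rfl

/-- A connected balanced bipartite graph `G` is α⁺-stable iff its vertex
set can be partitioned into parts `P 1, …, P k` such that each induced subgraph `G[P i]`
is bistable bipartite. -/
theorem stmt_3 {V : Type*} [Fintype V] (G : SimpleGraph V) (A B : Set V)
    (hbip : IsBipartition G A B) (hbal : A.ncard = B.ncard) (hconn : G.Connected) :
    AlphaPlusStable G ↔
      ∃ k : ℕ, 1 ≤ k ∧ ∃ P : Fin k → Set V,
        (∀ i j, i ≠ j → Disjoint (P i) (P j)) ∧ (⋃ i, P i) = Set.univ ∧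
        ∀ i, ∃ Ai Bi : Set (P i), BistableBipartite (G.induce (P i)) Ai Bi := by
  classical
  constructor
  · intro halpha
    by_cases hhall : ∀ X ⊆ A, X.ncard ≤ (nbrSet G X).ncard
    · have hAne : A.Nonempty := by
        obtain ⟨v⟩ := hconn.nonempty
        rcases (hbip.2.1 ▸ Set.mem_univ v : v ∈ A ∪ B) with hv | hv
        · exact ⟨v, hv⟩
        · have hB : 0 < B.ncard := (Set.ncard_pos (Set.toFinite _)).mpr ⟨v, hv⟩
          exact (Set.ncard_pos (Set.toFinite _)).mp (by omega)
      exact hall_decomp hbip hbal hAne hhall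
    · exfalso
      push_neg at hhall
      obtain ⟨X, hXA, hXd⟩ := hhall
      obtain ⟨x, y, hxy, hnadj, hcore⟩ := core_pair hbip hbal hconn ⟨X, hXA, hXd⟩
      have heq := halpha x y hxy hnadj
      obtain ⟨S, hS, hScard⟩ := exists_maxStableSet (G ⊔ SimpleGraph.fromEdgeSet {s(x, y)})
      have hSG : IsStableSet G S := fun u hu v hv hne h =>
        hS hu hv hne ((SimpleGraph.sup_adj _ _ _ _).mpr (Or.inl h))
      have hmax : IsMaxStableSet G S := ⟨hSG, by rw [hScard, heq]⟩
      obtain ⟨hxS, hyS⟩ := hcore S hmax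
      refine hS hxS hyS hxy ?_
      exact (SimpleGraph.sup_adj _ _ _ _).mpr
        (Or.inr ((SimpleGraph.fromEdgeSet_adj _).mpr ⟨Set.mem_singleton_iff.mpr rfl, hxy⟩))
  · rintro ⟨k, hk, P, hPdisj, hPunion, hPbis⟩
    have hpart : ∀ i, 2 * stabNum (G.induce (P i)) = (P i).ncard := by
      intro i
      obtain ⟨Ai, Bi, ⟨⟨hdisji, huni, _⟩, hiff⟩⟩ := hPbis i
      have hAi := (hiff Ai).mpr (Or.inl rfl)
      have hBi := (hiff Bi).mpr (Or.inr rfl)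
      have hcard : Ai.ncard + Bi.ncard = (P i).ncard := by
        rw [← Set.ncard_union_eq hdisji (Set.toFinite _) (Set.toFinite _), huni,
          Set.ncard_univ, Nat.card_coe_set_eq]
      have h1 := hAi.2
      have h2 := hBi.2
      omega
    have hstabA : stabNum G = A.ncard := by
      refine le_antisymm (stabNum_le fun S hS => ?_) (le_stabNum (bip_stable_A hbip))
      have hsum1 : (⋃ i, P i).ncard = ∑ i, (P i).ncard := ncard_biUnion_eq P hPdisj
      have hsum2 : S.ncard = ∑ i, (S ∩ P i).ncard := by
        have hdisj2 : ∀ i j, i ≠ j → Disjoint (S ∩ P i) (S ∩ P j) := fun i j hij =>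
          Disjoint.mono Set.inter_subset_right Set.inter_subset_right (hPdisj i j hij)
        have h := ncard_biUnion_eq (fun i => S ∩ P i) hdisj2
        rw [← Set.inter_iUnion, hPunion, Set.inter_univ] at h
        exact h
      have hpartle : ∀ i, (S ∩ P i).ncard ≤ stabNum (G.induce (P i)) := by
        intro i
        haveI : Fintype ↥(P i) := Fintype.ofFinite _
        have hTcard : (Subtype.val ⁻¹' S : Set ↥(P i)).ncard = (S ∩ P i).ncard := by
          rw [← Set.ncard_image_of_injective _ Subtype.val_injective,
            Subtype.image_preimage_coe, Set.inter_comm]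
        have hTstable : IsStableSet (G.induce (P i)) (Subtype.val ⁻¹' S) := by
          intro u hu v hv hne hadj'
          exact hS hu hv (fun h => hne (Subtype.val_injective h)) hadj'
        rw [← hTcard]
        exact le_stabNum hTstable
      have hcardV : ∑ i, (P i).ncard = A.ncard + B.ncard := by
        rw [← hsum1, hPunion, ← hbip.2.1,
          Set.ncard_union_eq hbip.1 (Set.toFinite _) (Set.toFinite _)]
      have hsumle : ∑ i, (S ∩ P i).ncard ≤ ∑ i, stabNum (G.induce (P i)) :=
        Finset.sum_le_sum fun i _ => hpartle i
      have hsum3 : ∑ i, 2 * stabNum (G.induce (P i)) = ∑ i, (P i).ncard :=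
        Finset.sum_congr rfl fun i _ => hpart i
      have hmul : 2 * ∑ i, stabNum (G.induce (P i)) = ∑ i, 2 * stabNum (G.induce (P i)) :=
        Finset.mul_sum _ _ _
      omega
    intro x y hxy hnadj
    have hle : stabNum (G ⊔ SimpleGraph.fromEdgeSet {s(x, y)}) ≤ stabNum G :=
      stabNum_le fun S hS => le_stabNum (fun u hu v hv hne h =>
        hS hu hv hne ((SimpleGraph.sup_adj _ _ _ _).mpr (Or.inl h)))
    have hge : stabNum G ≤ stabNum (G ⊔ SimpleGraph.fromEdgeSet {s(x, y)}) := by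
      have hCx : ∃ C : Set V, IsStableSet G C ∧ C.ncard = A.ncard ∧ x ∉ C := by
        rcases (hbip.2.1 ▸ Set.mem_univ x : x ∈ A ∪ B) with hx | hx
        · exact ⟨B, bip_stable_B hbip, hbal.symm, Set.disjoint_left.mp hbip.1 hx⟩
        · exact ⟨A, bip_stable_A hbip, rfl, Set.disjoint_right.mp hbip.1 hx⟩
      obtain ⟨C, hCst, hCcard, hxC⟩ := hCx
      have hCst' : IsStableSet (G ⊔ SimpleGraph.fromEdgeSet {s(x, y)}) C := by
        intro u hu v hv hne hadj'
        rcases (SimpleGraph.sup_adj _ _ _ _).mp hadj' with h | h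
        · exact hCst hu hv hne h
        · rw [SimpleGraph.fromEdgeSet_adj] at h
          rcases Sym2.eq_iff.mp (Set.mem_singleton_iff.mp h.1) with ⟨rfl, rfl⟩ | ⟨rfl, rfl⟩
          · exact hxC hu
          · exact hxC hv
      calc stabNum G = A.ncard := hstabA
        _ = C.ncard := hCcard.symm
        _ ≤ stabNum (G ⊔ SimpleGraph.fromEdgeSet {s(x, y)}) := le_stabNum hCst'
    omega
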